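/- arXiv:1910.11154 — 2 statements merged into one kernel-verified Lean document; each statement's English description precedes it below -/
import Mathlib

section
/- If a location x of n ≥ 2 vendors on the circle satisfies |I_k| + |I_{k+1}| < |Ī| for some k (with I_j the cyclic intervals between consecutive vendors and |Ī| the maximum interval length), then x is not an equilibrium: some vendor can strictly increase its profit by relocating into the interior of a maximal gap. -/
noncomputable section

/-- Shortest arc distance on the circle of circumference 1. -/
def circleDist (x y : ℝ) : ℝ := min |x - y + 1| (min |x - y| |x - y - 1|)

open scoped Classical

/-- The set of vendors nearest to the customer at `y`. -/
def nearest {n : ℕ} (ξ : Fin n → ℝ) (y : ℝ) : Finset (Fin n) :=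
  Finset.univ.filter fun j => ∀ i, circleDist (ξ j) y ≤ circleDist (ξ i) y

/-- Density of demand of customer `y` going to vendor `k`. -/
def rho {n : ℕ} (ξ : Fin n → ℝ) (k : Fin n) (y : ℝ) : ℝ :=
  if k ∈ nearest ξ y then (1 : ℝ) / (nearest ξ y).card else 0

/-- Profit of vendor `k`. -/
def profit {n : ℕ} (k : Fin n) (ξ : Fin n → ℝ) : ℝ :=
  ∫ y in (0:ℝ)..1, rho ξ k y

/-- Equilibrium: no vendor can strictly increase profit by unilateral relocation. -/
def IsEquilibrium {n : ℕ} (x : Fin n → ℝ) : Prop :=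
  ∀ k : Fin n, ∀ x' ∈ Set.Icc (0:ℝ) 1,
    profit k (Function.update x k x') ≤ profit k x

/-- Length of the cyclic gap `I_j = [x_j, x_{j+1}]` (for sorted `x` with `x 0 = 0`). -/
def gap {n : ℕ} [NeZero n] (x : Fin n → ℝ) (j : Fin n) : ℝ :=
  (if (j : ℕ) + 1 = n then 1 else 0) + x (j + 1) - x j

/-- The right endpoint of gap `I_j`, unwrapped to the real line. -/
def nextVal {n : ℕ} [NeZero n] (x : Fin n → ℝ) (j : Fin n) : ℝ :=
  (if (j : ℕ) + 1 = n then 1 else 0) + x (j + 1)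

/-- Maximum cyclic gap length `|Ī|`. -/
def maxGap {n : ℕ} [NeZero n] (x : Fin n → ℝ) : ℝ := ⨆ j, gap x j

open Set MeasureTheory

/-! ### Auxiliary lemmas -/

lemma circleDist_nonneg (a y : ℝ) : 0 ≤ circleDist a y := by
  unfold circleDist; positivity

lemma circleDist_self (a : ℝ) : circleDist a a = 0 := by
  simp [circleDist]

lemma circleDist_formula {a y : ℝ} (h1 : |a - y| ≤ 1) :
    circleDist a y = min |a - y| (1 - |a - y|) := by
  unfold circleDist
  rcases le_total 0 (a - y) with h | h
  · rw [abs_of_nonneg h, abs_of_nonneg (by linarith : (0:ℝ) ≤ a - y + 1),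
      abs_of_nonpos (by rw [abs_of_nonneg h] at h1; linarith : a - y - 1 ≤ 0)]
    rw [min_eq_right ((min_le_left _ _).trans (by linarith))]
    ring_nf
  · rw [abs_of_nonpos h, abs_of_nonpos (by rw [abs_of_nonpos h] at h1; linarith : a - y - 1 ≤ 0),
      abs_of_nonneg (by rw [abs_of_nonpos h] at h1; linarith : (0:ℝ) ≤ a - y + 1)]
    have h2 : min (-(a-y)) (-(a-y-1)) = -(a-y) := min_eq_left (by linarith)
    rw [h2, min_comm]
    ring_nf

lemma continuous_circleDist (a : ℝ) : Continuous (fun y => circleDist a y) := by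
  unfold circleDist; fun_prop

lemma measurable_rho {n : ℕ} (ξ : Fin n → ℝ) (k : Fin n) : Measurable (rho ξ k) := by
  have hmem : ∀ s : Finset (Fin n), MeasurableSet {y : ℝ | nearest ξ y = s} := by
    intro s
    have h : {y : ℝ | nearest ξ y = s} =
        ⋂ j, {y : ℝ | (∀ i, circleDist (ξ j) y ≤ circleDist (ξ i) y) ↔ j ∈ s} := by
      ext y
      simp only [Set.mem_setOf_eq, Set.mem_iInter, Finset.ext_iff, nearest, Finset.mem_filter,
        Finset.mem_univ, true_and]
    rw [h]
    refine MeasurableSet.iInter fun j => ?_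
    by_cases hj : j ∈ s
    · have h2 : {y : ℝ | (∀ i, circleDist (ξ j) y ≤ circleDist (ξ i) y) ↔ j ∈ s} =
          ⋂ i, {y : ℝ | circleDist (ξ j) y ≤ circleDist (ξ i) y} := by
        ext y; simp [hj]
      rw [h2]
      exact MeasurableSet.iInter fun i =>
        measurableSet_le (continuous_circleDist _).measurable (continuous_circleDist _).measurable
    · have h2 : {y : ℝ | (∀ i, circleDist (ξ j) y ≤ circleDist (ξ i) y) ↔ j ∈ s} =
          (⋂ i, {y : ℝ | circleDist (ξ j) y ≤ circleDist (ξ i) y})ᶜ := by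
        ext y; simp [hj]
      rw [h2]
      exact (MeasurableSet.iInter fun i =>
        measurableSet_le (continuous_circleDist _).measurable
          (continuous_circleDist _).measurable).compl
  have hrho : rho ξ k = fun y => ∑ s : Finset (Fin n),
      Set.indicator {y' : ℝ | nearest ξ y' = s}
        (fun _ => if k ∈ s then (1:ℝ)/s.card else 0) y := by
    funext y
    rw [Finset.sum_eq_single (nearest ξ y)]
    · simp [rho, Set.indicator]
    · intro s _ hs
      simp [Set.indicator, Ne.symm hs]
    · simp
  rw [hrho]
  exact Finset.measurable_sum _ fun s _ => (measurable_const.indicator (hmem s))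

lemma rho_nonneg {n : ℕ} (ξ : Fin n → ℝ) (k : Fin n) (y : ℝ) : 0 ≤ rho ξ k y := by
  unfold rho; split <;> positivity

lemma rho_le_one {n : ℕ} (ξ : Fin n → ℝ) (k : Fin n) (y : ℝ) : rho ξ k y ≤ 1 := by
  unfold rho
  split
  · rename_i h
    have h1 : 1 ≤ (nearest ξ y).card := Finset.card_pos.mpr ⟨k, h⟩
    have h2 : (1:ℝ) ≤ ((nearest ξ y).card : ℝ) := by exact_mod_cast h1
    rw [div_le_one (by linarith)]; linarith
  · linarith

lemma integrableOn_rho {n : ℕ} (ξ : Fin n → ℝ) (k : Fin n) :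
    MeasureTheory.IntegrableOn (rho ξ k) (Set.Ioc (0:ℝ) 1) := by
  apply MeasureTheory.Measure.integrableOn_of_bounded (M := 1)
  · simp [Real.volume_Ioc]
  · exact (measurable_rho ξ k).aestronglyMeasurable
  · refine MeasureTheory.ae_of_all _ fun y => ?_
    rw [Real.norm_eq_abs, abs_of_nonneg (rho_nonneg ξ k y)]
    exact rho_le_one ξ k y

lemma clip3 {c d : ℝ} (hcd : c ≤ d) (hc : c ≤ 1) (hd : 0 ≤ d) (hdc : d - c ≤ 1) :
    (volume ((Icc c d ∪ Icc (c+1) (d+1) ∪ Icc (c-1) (d-1)) ∩ Ioc (0:ℝ) 1)).toReal ≤ d - c := by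
  have hsub : (Icc c d ∪ Icc (c+1) (d+1) ∪ Icc (c-1) (d-1)) ∩ Ioc (0:ℝ) 1 ⊆
      Icc (max c 0) (min d 1) ∪ Icc (c+1) (min (d+1) 1) ∪ Icc (max (c-1) 0) (d-1) := by
    rintro y ⟨hS, hy0, hy1⟩
    rcases hS with (h | h) | h
    · exact Or.inl (Or.inl ⟨max_le h.1 hy0.le, le_min h.2 hy1⟩)
    · exact Or.inl (Or.inr ⟨h.1, le_min h.2 hy1⟩)
    · exact Or.inr ⟨max_le h.1 hy0.le, h.2⟩
  have hv : volume ((Icc c d ∪ Icc (c+1) (d+1) ∪ Icc (c-1) (d-1)) ∩ Ioc (0:ℝ) 1) ≤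
      ENNReal.ofReal (min d 1 - max c 0) + ENNReal.ofReal (min (d+1) 1 - (c+1))
        + ENNReal.ofReal (d - 1 - max (c-1) 0) := by
    refine le_trans (measure_mono hsub) ?_
    refine le_trans (measure_union_le _ _) (add_le_add ?_ ?_)
    · refine le_trans (measure_union_le _ _) (add_le_add ?_ ?_) <;> rw [Real.volume_Icc]
    · rw [Real.volume_Icc]
  have hne : ENNReal.ofReal (min d 1 - max c 0) + ENNReal.ofReal (min (d+1) 1 - (c+1))
      + ENNReal.ofReal (d - 1 - max (c-1) 0) ≠ ⊤ := by
    simp [ENNReal.add_ne_top]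
  refine le_trans (ENNReal.toReal_mono hne hv) ?_
  rw [ENNReal.toReal_add (by simp [ENNReal.add_ne_top]) (by simp),
    ENNReal.toReal_add (by simp) (by simp),
    ENNReal.toReal_ofReal', ENNReal.toReal_ofReal', ENNReal.toReal_ofReal']
  simp only [max_def, min_def]
  split_ifs <;> linarith

lemma exists_theta {p y : ℝ} (hp : p ∈ Icc (0:ℝ) 1) (hy : y ∈ Icc (0:ℝ) 1) :
    ∃ θ s : ℝ, (s = 0 ∨ s = 1 ∨ s = -1) ∧ y = p + θ + s ∧ |θ| ≤ 1/2 ∧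
      circleDist p y = |θ| := by
  obtain ⟨hp0, hp1⟩ := hp; obtain ⟨hy0, hy1⟩ := hy
  have h1 : |p - y| ≤ 1 := abs_le.mpr ⟨by linarith, by linarith⟩
  have hf := circleDist_formula h1
  rcases le_or_gt |p - y| (1/2) with h | h
  · refine ⟨y - p, 0, Or.inl rfl, by ring, by rwa [abs_sub_comm] at h, ?_⟩
    rw [hf, abs_sub_comm, min_eq_left (by rw [abs_sub_comm]; linarith)]
  · rcases abs_cases (p - y) with ⟨he, _⟩ | ⟨he, _⟩
    · refine ⟨1 - (p - y), -1, Or.inr (Or.inr rfl), by ring, ?_, ?_⟩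
      · rw [abs_of_nonneg (by linarith)]; linarith
      · rw [hf, min_eq_right (by linarith), he,
          abs_of_nonneg (by linarith : (0:ℝ) ≤ 1 - (p - y))]
    · refine ⟨-1 - (p - y), 1, Or.inr (Or.inl rfl), by ring, ?_, ?_⟩
      · rw [abs_of_nonpos (by linarith)]; linarith
      · rw [hf, min_eq_right (by linarith), he,
          abs_of_nonpos (by linarith : -1 - (p - y) ≤ 0)]; ring

lemma theta_right {θ B u s w : ℝ} (hθ : |θ| ≤ 1/2) (hB : 0 < B) (hB1 : B ≤ 1)
    (hu : |u| ≤ 1) (hrel : u = B - w - θ - s) (hs : s = 0 ∨ s = 1 ∨ s = -1)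
    (hw : w = 0 ∨ w = 1) (hcell : |θ| ≤ min |u| (1 - |u|)) : θ ≤ B / 2 := by
  by_contra hcon
  push_neg at hcon
  have hθpos : 0 < θ := by linarith
  have hθ2 : θ ≤ 1/2 := (le_abs_self θ).trans hθ
  rw [abs_of_pos hθpos] at hcell
  have h1 : θ ≤ |u| := hcell.trans (min_le_left _ _)
  have h2 : θ ≤ 1 - |u| := hcell.trans (min_le_right _ _)
  have hu' := abs_le.mp hu
  rcases hs with rfl | rfl | rfl <;> rcases hw with rfl | rfl <;>
    rcases abs_cases u with ⟨ha, hb⟩ | ⟨ha, hb⟩ <;> linarith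

lemma theta_left {θ A u s w : ℝ} (hθ : |θ| ≤ 1/2) (hA : 0 < A) (hA1 : A ≤ 1)
    (hu : |u| ≤ 1) (hrel : u = -A + w - s - θ) (hs : s = 0 ∨ s = 1 ∨ s = -1)
    (hw : w = 0 ∨ w = 1) (hcell : |θ| ≤ min |u| (1 - |u|)) : -(A / 2) ≤ θ := by
  have h := theta_right (θ := -θ) (B := A) (u := -u) (s := -s) (w := w)
    (by rwa [abs_neg]) hA hA1 (by rwa [abs_neg]) (by rw [hrel]; ring)
    (by rcases hs with rfl | rfl | rfl <;> norm_num) hw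
    (by rwa [abs_neg, abs_neg])
  linarith

lemma circleDist_eq_zero_cases {a p : ℝ} (ha0 : 0 ≤ a) (ha1 : a ≤ 1) (hp0 : 0 ≤ p)
    (hp1 : p ≤ 1) (h : circleDist a p = 0) :
    a = p ∨ (a = 1 ∧ p = 0) ∨ (a = 0 ∧ p = 1) := by
  rw [circleDist_formula (abs_le.mpr ⟨by linarith, by linarith⟩)] at h
  have h' : |a - p| = 0 ∨ 1 - |a - p| = 0 := by
    rcases le_total |a - p| (1 - |a - p|) with hle | hle
    · left; rwa [min_eq_left hle] at h
    · right; rwa [min_eq_right hle] at h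
  rcases h' with h' | h'
  · left; have := abs_eq_zero.mp h'; linarith
  · have habs : |a - p| = 1 := by linarith
    rcases abs_cases (a - p) with ⟨he, _⟩ | ⟨he, _⟩
    · right; left; constructor <;> linarith [he ▸ habs]
    · right; right; constructor <;> linarith [he ▸ habs]

lemma circleDist_transfer {a p y : ℝ} (ha0 : 0 ≤ a) (ha1 : a ≤ 1) (hp0 : 0 ≤ p)
    (hp1 : p ≤ 1) (hy0 : 0 ≤ y) (hy1 : y ≤ 1) (h : circleDist a p = 0) :
    circleDist a y = circleDist p y := by
  rcases circleDist_eq_zero_cases ha0 ha1 hp0 hp1 h with rfl | ⟨rfl, rfl⟩ | ⟨rfl, rfl⟩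
  · rfl
  · rw [circleDist_formula (abs_le.mpr ⟨by linarith, by linarith⟩),
      circleDist_formula (abs_le.mpr ⟨by linarith, by linarith⟩)]
    rw [abs_of_nonneg (by linarith : (0:ℝ) ≤ 1 - y),
      show (0:ℝ) - y = -y from by ring, abs_neg, abs_of_nonneg hy0,
      show (1:ℝ) - (1 - y) = y from by ring]
    exact min_comm _ _
  · rw [circleDist_formula (abs_le.mpr ⟨by linarith, by linarith⟩),
      circleDist_formula (abs_le.mpr ⟨by linarith, by linarith⟩)]
    rw [abs_of_nonneg (by linarith : (0:ℝ) ≤ 1 - y),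
      show (0:ℝ) - y = -y from by ring, abs_neg, abs_of_nonneg hy0,
      show (1:ℝ) - (1 - y) = y from by ring]
    exact min_comm _ _

lemma fin_val_add_one {n : ℕ} [NeZero n] (t : Fin n) :
    ((t + 1 : Fin n) : ℕ) = if (t : ℕ) + 1 = n then 0 else (t : ℕ) + 1 := by
  have h := t.isLt
  have hn1 := Nat.one_le_iff_ne_zero.mpr (NeZero.ne n)
  rcases Nat.eq_or_lt_of_le hn1 with h1 | h1
  · have h2 : ((t + 1 : Fin n) : ℕ) = 0 :=
      Nat.lt_one_iff.mp (by rw [h1]; exact (t+1 : Fin n).isLt)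
    rw [h2, if_pos (by omega)]
  · have hv : ((t + 1 : Fin n) : ℕ) = ((t:ℕ) + 1) % n := by
      rw [Fin.add_def, Fin.val_one']
      rw [Nat.mod_eq_of_lt h1]
    rw [hv]
    by_cases h2 : (t:ℕ) + 1 = n
    · rw [if_pos h2, h2, Nat.mod_self]
    · rw [if_neg h2, Nat.mod_eq_of_lt (by omega)]

section basics
variable {n : ℕ} [NeZero n] (x : Fin n → ℝ) (hx0 : x 0 = 0) (hmono : Monotone x)
  (hx1 : ∀ j, x j ≤ 1)

include hx0 hmono in
lemma x_nonneg : ∀ i, 0 ≤ x i := fun i => by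
  rw [← hx0]; exact hmono (by simp [Fin.le_def])

include hx0 hmono hx1 in
lemma gap_nonneg : ∀ j, 0 ≤ gap x j := by
  intro j
  unfold gap
  by_cases h : (j : ℕ) + 1 = n
  · rw [if_pos h]
    have := hx1 j
    have h0 : 0 ≤ x (j + 1) := x_nonneg x hx0 hmono (j+1)
    linarith
  · rw [if_neg h]
    have hle : j ≤ j + 1 := by rw [Fin.le_def, fin_val_add_one, if_neg h]; omega
    have := hmono hle
    linarith

include hx0 hmono hx1 in
lemma gap_le_one : ∀ j, gap x j ≤ 1 := by
  intro j
  unfold gap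
  have h0 : 0 ≤ x j := x_nonneg x hx0 hmono j
  by_cases h : (j : ℕ) + 1 = n
  · rw [if_pos h]
    have hj1 : (j + 1 : Fin n) = 0 := by
      apply Fin.ext; rw [fin_val_add_one, if_pos h]; rfl
    rw [hj1, hx0]; linarith
  · rw [if_neg h]
    have := hx1 (j+1)
    linarith

lemma gap_le_maxGap : ∀ j, gap x j ≤ maxGap x :=
  fun j => le_ciSup (Set.Finite.bddAbove (Set.finite_range _)) j

lemma exists_maxGap : ∃ l, gap x l = maxGap x := exists_eq_ciSup_of_finite

lemma nextVal_eq : ∀ j, nextVal x j = x j + gap x j := by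
  intro j; unfold nextVal gap; ring

end basics

set_option maxHeartbeats 2000000 in
theorem not_equilibrium_of_small_gaps {n : ℕ} [NeZero n] (hn : 2 ≤ n)
    (x : Fin n → ℝ) (hx0 : x 0 = 0) (hmono : Monotone x) (hx1 : ∀ j, x j ≤ 1)
    (hbad : ∃ k : Fin n, gap x k + gap x (k + 1) < maxGap x) :
    ∃ k : Fin n, ∃ x' ∈ Set.Icc (0:ℝ) 1,
      (∃ l : Fin n, gap x l = maxGap x ∧ x l < x' ∧ x' < nextVal x l) ∧
      profit k x < profit k (Function.update x k x') := by
  classical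
  obtain ⟨k, hk⟩ := hbad
  obtain ⟨l, hl⟩ := exists_maxGap x
  set j : Fin n := k + 1 with hjdef
  set L : ℝ := maxGap x with hLdef
  have hxn : ∀ i, 0 ≤ x i := x_nonneg x hx0 hmono
  have hg0 : ∀ i, 0 ≤ gap x i := gap_nonneg x hx0 hmono hx1
  have hg1 : ∀ i, gap x i ≤ 1 := gap_le_one x hx0 hmono hx1
  have hgL : ∀ i, gap x i ≤ L := gap_le_maxGap x
  have hL0 : 0 < L := lt_of_le_of_lt (add_nonneg (hg0 k) (hg0 j)) hk
  have hL1 : L ≤ 1 := hl ▸ hg1 l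
  -- distinctness and n ≥ 3
  have hsucc : ∀ t : Fin n, t ≠ t + 1 := by
    intro t h
    have hv := fin_val_add_one t
    rw [← h] at hv
    have := t.isLt
    split_ifs at hv with hc <;> omega
  have hkj : k ≠ j := hsucc k
  have hlk : l ≠ k := by
    rintro rfl
    have := hg0 j
    rw [hl] at hk
    linarith
  have hlj : l ≠ j := by
    rintro rfl
    have := hg0 k
    rw [hl] at hk
    linarith
  have hn3 : 3 ≤ n := by
    have hcard : ({l, k, j} : Finset (Fin n)).card = 3 := by
      rw [Finset.card_insert_of_notMem (by simp [hlk, hlj]),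
        Finset.card_insert_of_notMem (by simp [hkj]), Finset.card_singleton]
    have h2 := Finset.card_le_univ ({l, k, j} : Finset (Fin n))
    rw [hcard] at h2
    simpa using h2
  have hjj1 : j ≠ j + 1 := hsucc j
  have hkj1 : k ≠ j + 1 := by
    intro h
    have hv1 := fin_val_add_one k
    have hv2 := fin_val_add_one j
    rw [← hjdef] at hv1
    rw [← h] at hv2
    have := k.isLt
    have := j.isLt
    split_ifs at hv1 hv2 <;> omega
  -- the maximal gap
  have hNg : nextVal x l = x l + L := by rw [nextVal_eq x l, hl]
  have hN1 : nextVal x l ≤ 1 := by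
    unfold nextVal
    by_cases hw : (l:ℕ)+1 = n
    · rw [if_pos hw]
      have h0 : (l+1 : Fin n) = 0 := by
        apply Fin.ext; rw [fin_val_add_one, if_pos hw]; rfl
      rw [h0, hx0]; norm_num
    · rw [if_neg hw]; simpa using hx1 (l+1)
  have hxlL : x l + L ≤ 1 := by rw [← hNg]; exact hN1
  set x' : ℝ := x l + L/2 with hx'def
  have hx'mem : x' ∈ Icc (0:ℝ) 1 :=
    ⟨by have := hxn l; rw [hx'def]; linarith, by rw [hx'def]; linarith⟩
  have hout : ∀ i : Fin n, x i ≤ x l ∨ x l + L ≤ x i := by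
    intro i
    rcases le_or_gt i l with hi | hi
    · exact Or.inl (hmono hi)
    · right
      have hw : (l:ℕ)+1 ≠ n := by
        intro hw
        rw [Fin.lt_def] at hi
        have := i.isLt
        omega
      have hle : (l+1 : Fin n) ≤ i := by
        rw [Fin.le_def, fin_val_add_one, if_neg hw]
        rw [Fin.lt_def] at hi
        omega
      have h2 : x (l+1) ≤ x i := hmono hle
      have h3 : nextVal x l = x (l+1) := by
        unfold nextVal; rw [if_neg hw]; ring
      rw [← hNg, h3]
      exact h2
  -- Part 3 : profit of the relocated vendor
  set ξ' : Fin n → ℝ := Function.update x j x' with hξ'def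
  have claim_dx' : ∀ y ∈ Ioo (x l + L/4) (x l + 3*L/4),
      circleDist x' y = |x' - y| ∧ |x' - y| < L/4 := by
    intro y hy
    obtain ⟨hy1, hy2⟩ := hy
    have habs : |x' - y| < L/4 := by
      rw [abs_lt, hx'def]; constructor <;> linarith
    refine ⟨?_, habs⟩
    rw [circleDist_formula (by linarith [abs_nonneg (x' - y)] : |x' - y| ≤ 1)]
    exact min_eq_left (by linarith)
  have hyIcc : ∀ y ∈ Ioo (x l + L/4) (x l + 3*L/4), 0 < y ∧ y ≤ 1 := by
    intro y hy
    obtain ⟨hy1, hy2⟩ := hy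
    have := hxn l
    constructor <;> linarith
  have claim_far : ∀ y ∈ Ioo (x l + L/4) (x l + 3*L/4), ∀ i : Fin n, i ≠ j →
      |x' - y| < circleDist (x i) y := by
    intro y hy i hij
    obtain ⟨hy0, hy1'⟩ := hyIcc y hy
    obtain ⟨hy1, hy2⟩ := hy
    have habs := (claim_dx' y ⟨hy1, hy2⟩).2
    have hiy : |x i - y| ≤ 1 := abs_le.mpr ⟨by linarith [hxn i], by linarith [hx1 i]⟩
    rw [circleDist_formula hiy]
    rcases hout i with hcase | hcase
    · apply lt_min
      · have h2 : y - x i ≤ |x i - y| := by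
          rw [abs_sub_comm]; exact le_abs_self _
        linarith
      · have h2 : |x i - y| = y - x i := by
          rw [abs_sub_comm]; exact abs_of_nonneg (by linarith)
        rw [h2]
        have := hxn i
        linarith
    · apply lt_min
      · have h2 : x i - y ≤ |x i - y| := le_abs_self _
        linarith
      · have h2 : |x i - y| = x i - y := abs_of_nonneg (by linarith)
        rw [h2]
        have := hx1 i
        have := hxn l
        linarith
  have claim_near : ∀ y ∈ Ioo (x l + L/4) (x l + 3*L/4), nearest ξ' y = {j} := by
    intro y hy
    have hdx' := claim_dx' y hy
    ext i
    simp only [nearest, Finset.mem_filter, Finset.mem_univ, true_and, Finset.mem_singleton]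
    constructor
    · intro hmem
      by_contra hij
      have h1 := hmem j
      have he1 : ξ' i = x i := Function.update_of_ne hij _ _
      have he2 : ξ' j = x' := Function.update_self _ _ _
      rw [he1, he2, hdx'.1] at h1
      linarith [claim_far y hy i hij]
    · rintro rfl
      intro i'
      by_cases hij : i' = j
      · rw [hij]
      · have he1 : ξ' i' = x i' := Function.update_of_ne hij _ _
        have he2 : ξ' j = x' := Function.update_self _ _ _
        rw [he1, he2, hdx'.1]
        exact (claim_far y hy i' hij).le
  have hJsub : Ioo (x l + L/4) (x l + 3*L/4) ⊆ Ioc (0:ℝ) 1 := by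
    intro y hy
    exact ⟨(hyIcc y hy).1, (hyIcc y hy).2⟩
  have hnew : L/2 ≤ profit j ξ' := by
    have hmeas : MeasurableSet (Ioo (x l + L/4) (x l + 3*L/4)) := measurableSet_Ioo
    have hindint : MeasureTheory.IntegrableOn
        ((Ioo (x l + L/4) (x l + 3*L/4)).indicator fun _ => (1:ℝ)) (Ioc (0:ℝ) 1) := by
      apply MeasureTheory.Integrable.indicator _ hmeas
      refine (MeasureTheory.integrableOn_const_iff (C := (1:ℝ))).mpr (Or.inr ?_)
      simp [Real.volume_Ioc]
    have hle : ∀ y ∈ Ioc (0:ℝ) 1,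
        (Ioo (x l + L/4) (x l + 3*L/4)).indicator (fun _ => (1:ℝ)) y ≤ rho ξ' j y := by
      intro y _
      by_cases hyJ : y ∈ Ioo (x l + L/4) (x l + 3*L/4)
      · rw [Set.indicator_of_mem hyJ]
        have hnear := claim_near y hyJ
        unfold rho
        rw [hnear]
        simp
      · rw [Set.indicator_of_notMem hyJ]
        exact rho_nonneg ξ' j y
    calc L/2 = ((volume (Ioc (0:ℝ) 1 ∩ Ioo (x l + L/4) (x l + 3*L/4))).toReal) • (1:ℝ) := by
          rw [Set.inter_eq_self_of_subset_right hJsub, Real.volume_Ioo,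
            ENNReal.toReal_ofReal (by linarith)]
          rw [smul_eq_mul, mul_one]
          ring
      _ = ∫ y in Ioc (0:ℝ) 1, (Ioo (x l + L/4) (x l + 3*L/4)).indicator (fun _ => (1:ℝ)) y := by
          rw [MeasureTheory.setIntegral_indicator hmeas, MeasureTheory.setIntegral_const, measureReal_def]
      _ ≤ ∫ y in Ioc (0:ℝ) 1, rho ξ' j y :=
          MeasureTheory.setIntegral_mono_on hindint (integrableOn_rho ξ' j) measurableSet_Ioc hle
      _ = profit j ξ' := by
          rw [profit, intervalIntegral.integral_of_le zero_le_one]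
  -- Part 2 : profit of vendor j in the old configuration
  have hp0 : 0 ≤ x j := hxn j
  have hp1 : x j ≤ 1 := hx1 j
  set A' : ℝ := if 0 < gap x k then gap x k else L with hA'def
  set B' : ℝ := if 0 < gap x j then gap x j else L with hB'def
  have hA'0 : 0 ≤ A' := by rw [hA'def]; split_ifs with h; exacts [hg0 k, le_of_lt hL0]
  have hB'0 : 0 ≤ B' := by rw [hB'def]; split_ifs with h; exacts [hg0 j, le_of_lt hL0]
  have hA'L : A' ≤ L := by rw [hA'def]; split_ifs with h; exacts [hgL k, le_rfl]
  have hB'L : B' ≤ L := by rw [hB'def]; split_ifs with h; exacts [hgL j, le_rfl]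
  set S : Set ℝ := Icc (x j - A'/2) (x j + B'/2) ∪ Icc (x j - A'/2 + 1) (x j + B'/2 + 1)
      ∪ Icc (x j - A'/2 - 1) (x j + B'/2 - 1) with hSdef
  have hSmeas : MeasurableSet S :=
    ((measurableSet_Icc.union measurableSet_Icc).union measurableSet_Icc)
  set M : Finset (Fin n) := Finset.univ.filter (fun i => circleDist (x i) (x j) = 0)
    with hMdef
  have hjM : j ∈ M := by
    rw [hMdef, Finset.mem_filter]
    exact ⟨Finset.mem_univ _, circleDist_self _⟩
  have hM1 : 1 ≤ M.card := Finset.card_pos.mpr ⟨j, hjM⟩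
  have hMsub : ∀ y, y ∈ Icc (0:ℝ) 1 → j ∈ nearest x y → M ⊆ nearest x y := by
    intro y hy hj i hiM
    rw [hMdef, Finset.mem_filter] at hiM
    have htr := circleDist_transfer (hxn i) (hx1 i) hp0 hp1 hy.1 hy.2 hiM.2
    simp only [nearest, Finset.mem_filter, Finset.mem_univ, true_and] at hj ⊢
    intro i'
    rw [htr]
    exact hj i'
  have hkM : gap x k = 0 → k ∈ M := by
    intro hA
    rw [hMdef, Finset.mem_filter]
    refine ⟨Finset.mem_univ _, ?_⟩
    have hg : (if (k:ℕ)+1 = n then (1:ℝ) else 0) + x j - x k = 0 := by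
      rw [hjdef]; exact hA
    by_cases hw : (k:ℕ)+1 = n
    · rw [if_pos hw] at hg
      have hpz : x j = 0 := by linarith [hx1 k, hxn j]
      have hxk : x k = 1 := by linarith
      rw [hxk, hpz]
      norm_num [circleDist]
    · rw [if_neg hw] at hg
      have hxk : x k = x j := by linarith
      rw [hxk]
      exact circleDist_self _
  have hj1M : gap x j = 0 → (j+1) ∈ M := by
    intro hB
    rw [hMdef, Finset.mem_filter]
    refine ⟨Finset.mem_univ _, ?_⟩
    have hg : (if (j:ℕ)+1 = n then (1:ℝ) else 0) + x (j+1) - x j = 0 := hB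
    by_cases hw : (j:ℕ)+1 = n
    · rw [if_pos hw] at hg
      have hpz : x j = 1 := by linarith [hxn (j+1), hx1 j]
      have hxj1 : x (j+1) = 0 := by linarith
      rw [hxj1, hpz]
      norm_num [circleDist]
    · rw [if_neg hw] at hg
      have hxj1 : x (j+1) = x j := by linarith
      rw [hxj1]
      exact circleDist_self _
  have hball : ∀ y, y ∈ Icc (0:ℝ) 1 → ∃ i, circleDist (x i) y ≤ L/2 := by
    intro y hy
    have h0S : (0 : Fin n) ∈ Finset.univ.filter (fun i : Fin n => x i ≤ y) := by
      simp [hx0, hy.1]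
    have hSne : (Finset.univ.filter (fun i : Fin n => x i ≤ y)).Nonempty := ⟨0, h0S⟩
    set i0 := (Finset.univ.filter (fun i : Fin n => x i ≤ y)).max' hSne with hi0def
    have hi0S := (Finset.univ.filter (fun i : Fin n => x i ≤ y)).max'_mem hSne
    have hi0y : x i0 ≤ y := (Finset.mem_filter.mp hi0S).2
    have hynext : y ≤ nextVal x i0 := by
      by_cases hw : (i0:ℕ)+1 = n
      · unfold nextVal
        rw [if_pos hw]
        linarith [hxn (i0+1), hy.2]
      · by_contra hcon
        push_neg at hcon
        have hx1y : x (i0+1) ≤ y := by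
          unfold nextVal at hcon
          rw [if_neg hw] at hcon
          linarith
        have hmem : (i0+1 : Fin n) ∈ Finset.univ.filter (fun i : Fin n => x i ≤ y) := by
          simp [hx1y]
        have hle := (Finset.univ.filter (fun i : Fin n => x i ≤ y)).le_max' _ hmem
        rw [← hi0def, Fin.le_def, fin_val_add_one, if_neg hw] at hle
        omega
    have hgapi : nextVal x i0 = x i0 + gap x i0 := nextVal_eq x i0
    rcases le_total (y - x i0) (gap x i0 / 2) with hhalf | hhalf
    · refine ⟨i0, ?_⟩
      have h1 : circleDist (x i0) y ≤ |x i0 - y| := (min_le_right _ _).trans (min_le_left _ _)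
      have h2 : |x i0 - y| = y - x i0 := by
        rw [abs_sub_comm]; exact abs_of_nonneg (by linarith)
      rw [h2] at h1
      linarith [hgL i0]
    · refine ⟨i0+1, ?_⟩
      by_cases hw : (i0:ℕ)+1 = n
      · have h0 : (i0+1 : Fin n) = 0 := by
          apply Fin.ext; rw [fin_val_add_one, if_pos hw]; rfl
        have hNv : nextVal x i0 = 1 := by
          unfold nextVal; rw [if_pos hw, h0, hx0]; ring
        rw [h0, hx0]
        have h1 : circleDist 0 y ≤ |0 - y + 1| := min_le_left _ _
        have h2 : |(0:ℝ) - y + 1| = 1 - y := by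
          rw [show (0:ℝ) - y + 1 = 1 - y from by ring]
          exact abs_of_nonneg (by linarith [hy.2])
        rw [h2] at h1
        linarith [hgL i0]
      · have hNv : nextVal x i0 = x (i0+1) := by
          unfold nextVal; rw [if_neg hw]; ring
        have h1 : circleDist (x (i0+1)) y ≤ |x (i0+1) - y| :=
          (min_le_right _ _).trans (min_le_left _ _)
        have h2 : |x (i0+1) - y| = x (i0+1) - y := abs_of_nonneg (by linarith [hNv ▸ hynext])
        rw [h2] at h1
        linarith [hgL i0, hNv ▸ hynext]
    -- pointwise bound
  have hpoint : ∀ y ∈ Ioc (0:ℝ) 1,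
      rho x j y ≤ (1/(M.card:ℝ)) * (S.indicator (fun _ => (1:ℝ)) y) := by
    intro y hy
    have hy' : y ∈ Icc (0:ℝ) 1 := Ioc_subset_Icc_self hy
    unfold rho
    split_ifs with hmem
    · have hcell : ∀ i, circleDist (x j) y ≤ circleDist (x i) y := by
        simpa [nearest] using hmem
      have hcard : M.card ≤ (nearest x y).card :=
        Finset.card_le_card (hMsub y hy' hmem)
      have hMpos : (0:ℝ) < (M.card:ℝ) := by exact_mod_cast hM1
      have hcard' : (1:ℝ)/((nearest x y).card) ≤ 1/(M.card:ℝ) := by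
        apply one_div_le_one_div_of_le hMpos
        exact_mod_cast hcard
      obtain ⟨θ, s, hs, hy_eq, hθhalf, hθdist⟩ := exists_theta ⟨hp0, hp1⟩ hy'
      have hθL : |θ| ≤ L/2 := by
        obtain ⟨i0, hi0⟩ := hball y hy'
        calc |θ| = circleDist (x j) y := hθdist.symm
          _ ≤ circleDist (x i0) y := hcell i0
          _ ≤ L/2 := hi0
      have hright : θ ≤ B'/2 := by
        rw [hB'def]
        split_ifs with hB
        · have hw01 : (if ((j:ℕ)+1 = n) then (1:ℝ) else 0) = 0 ∨
              (if ((j:ℕ)+1 = n) then (1:ℝ) else 0) = 1 := by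
            split_ifs <;> simp
          have hxj1 : x (j+1) = x j + gap x j - (if ((j:ℕ)+1 = n) then (1:ℝ) else 0) := by
            unfold gap; ring
          have hu1 : |x (j+1) - y| ≤ 1 :=
            abs_le.mpr ⟨by linarith [hxn (j+1), hy'.2], by linarith [hx1 (j+1), hy'.1]⟩
          have hc2 : |θ| ≤ min |x (j+1) - y| (1 - |x (j+1) - y|) := by
            rw [← circleDist_formula hu1, ← hθdist]
            exact hcell (j+1)
          exact theta_right hθhalf hB ((hgL j).trans hL1) hu1
            (by rw [hxj1, hy_eq]; ring) hs hw01 hc2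
        · linarith [le_abs_self θ, hθL]
      have hleft : -(A'/2) ≤ θ := by
        rw [hA'def]
        split_ifs with hA
        · have hw01 : (if ((k:ℕ)+1 = n) then (1:ℝ) else 0) = 0 ∨
              (if ((k:ℕ)+1 = n) then (1:ℝ) else 0) = 1 := by
            split_ifs <;> simp
          have hkp : x (k+1) = x j := by rw [hjdef]
          have hxk : x k = x j + (if ((k:ℕ)+1 = n) then (1:ℝ) else 0) - gap x k := by
            unfold gap; rw [hkp]; ring
          have hu1 : |x k - y| ≤ 1 :=
            abs_le.mpr ⟨by linarith [hxn k, hy'.2], by linarith [hx1 k, hy'.1]⟩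
          have hc2 : |θ| ≤ min |x k - y| (1 - |x k - y|) := by
            rw [← circleDist_formula hu1, ← hθdist]
            exact hcell k
          exact theta_left hθhalf hA ((hgL k).trans hL1) hu1
            (by rw [hxk, hy_eq]; ring) hs hw01 hc2
        · linarith [neg_abs_le θ, hθL]
      have hyS : y ∈ S := by
        rw [hSdef]
        rcases hs with rfl | rfl | rfl
        · refine Set.mem_union_left _ (Set.mem_union_left _ (Set.mem_Icc.mpr ⟨?_, ?_⟩)) <;>
            rw [hy_eq] <;> linarith
        · refine Set.mem_union_left _ (Set.mem_union_right _ (Set.mem_Icc.mpr ⟨?_, ?_⟩)) <;>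
            rw [hy_eq] <;> linarith
        · refine Set.mem_union_right _ (Set.mem_Icc.mpr ⟨?_, ?_⟩) <;>
            rw [hy_eq] <;> linarith
      rw [Set.indicator_of_mem hyS, mul_one]
      exact hcard'
    · exact mul_nonneg (one_div_nonneg.mpr (Nat.cast_nonneg _))
        (Set.indicator_nonneg (fun _ _ => zero_le_one) y)
  have hold : profit j x < L/2 := by
    have hindint : MeasureTheory.IntegrableOn (S.indicator fun _ => (1:ℝ)) (Ioc (0:ℝ) 1) := by
      apply MeasureTheory.Integrable.indicator _ hSmeas
      refine (MeasureTheory.integrableOn_const_iff (C := (1:ℝ))).mpr (Or.inr ?_)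
      simp [Real.volume_Ioc]
    have h2 : ∫ y in Ioc (0:ℝ) 1, rho x j y ≤
        ∫ y in Ioc (0:ℝ) 1, (1/(M.card:ℝ)) * S.indicator (fun _ => (1:ℝ)) y :=
      MeasureTheory.setIntegral_mono_on (integrableOn_rho x j)
        (hindint.const_mul _) measurableSet_Ioc hpoint
    have h3 : ∫ y in Ioc (0:ℝ) 1, (1/(M.card:ℝ)) * S.indicator (fun _ => (1:ℝ)) y
        = (1/(M.card:ℝ)) * (volume (S ∩ Ioc (0:ℝ) 1)).toReal := by
      rw [MeasureTheory.integral_const_mul, MeasureTheory.setIntegral_indicator hSmeas,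
        MeasureTheory.setIntegral_const, measureReal_def, smul_eq_mul, mul_one, Set.inter_comm]
    have hclip : (volume (S ∩ Ioc (0:ℝ) 1)).toReal ≤ (x j + B'/2) - (x j - A'/2) := by
      rw [hSdef]
      exact clip3 (by linarith) (by linarith) (by linarith) (by linarith)
    have hMpos : (0:ℝ) < (M.card:ℝ) := by exact_mod_cast hM1
    have hfinal : (1/(M.card:ℝ)) * ((x j + B'/2) - (x j - A'/2)) < L/2 := by
      have hdceq : (x j + B'/2) - (x j - A'/2) = (A' + B')/2 := by ring
      rw [hdceq]
      have hXnn : 0 ≤ (A' + B')/2 := by linarith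
      rcases (hg0 k).lt_or_eq with hA | hA <;> rcases (hg0 j).lt_or_eq with hB | hB
      · -- both gaps positive
        have hA'eq : A' = gap x k := by rw [hA'def, if_pos hA]
        have hB'eq : B' = gap x j := by rw [hB'def, if_pos hB]
        have h1M : 1/(M.card:ℝ) ≤ 1 := by
          rw [div_le_one hMpos]
          exact_mod_cast hM1
        rw [hA'eq, hB'eq]
        have hmul : (1/(M.card:ℝ)) * ((gap x k + gap x j)/2) ≤ (gap x k + gap x j)/2 :=
          mul_le_of_le_one_left (by linarith [hg0 k, hg0 j]) h1M
        linarith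
      · -- gap k > 0, gap j = 0
        have hA'eq : A' = gap x k := by rw [hA'def, if_pos hA]
        have hB'eq : B' = L := by rw [hB'def, if_neg (by rw [← hB]; exact lt_irrefl 0)]
        have hsubM : ({j, j+1} : Finset (Fin n)) ⊆ M :=
          Finset.insert_subset_iff.mpr ⟨hjM, Finset.singleton_subset_iff.mpr (hj1M hB.symm)⟩
        have hcard2 : ({j, j+1} : Finset (Fin n)).card = 2 := by
          rw [Finset.card_insert_of_notMem (by simp [hjj1]), Finset.card_singleton]
        have hM2 : (2:ℝ) ≤ (M.card:ℝ) := by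
          exact_mod_cast hcard2 ▸ Finset.card_le_card hsubM
        have h1M : 1/(M.card:ℝ) ≤ 1/2 := one_div_le_one_div_of_le (by norm_num) hM2
        have hAL : gap x k < L := by linarith [hg0 j]
        rw [hA'eq, hB'eq]
        have hmul : (1/(M.card:ℝ)) * ((gap x k + L)/2) ≤ (1/2) * ((gap x k + L)/2) :=
          mul_le_mul_of_nonneg_right h1M (by linarith [hg0 k])
        linarith
      · -- gap k = 0, gap j > 0
        have hA'eq : A' = L := by rw [hA'def, if_neg (by rw [← hA]; exact lt_irrefl 0)]
        have hB'eq : B' = gap x j := by rw [hB'def, if_pos hB]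
        have hsubM : ({k, j} : Finset (Fin n)) ⊆ M :=
          Finset.insert_subset_iff.mpr ⟨hkM hA.symm, Finset.singleton_subset_iff.mpr hjM⟩
        have hcard2 : ({k, j} : Finset (Fin n)).card = 2 := by
          rw [Finset.card_insert_of_notMem (by simp [hkj]), Finset.card_singleton]
        have hM2 : (2:ℝ) ≤ (M.card:ℝ) := by
          exact_mod_cast hcard2 ▸ Finset.card_le_card hsubM
        have h1M : 1/(M.card:ℝ) ≤ 1/2 := one_div_le_one_div_of_le (by norm_num) hM2
        have hBL : gap x j < L := by linarith [hg0 k]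
        rw [hA'eq, hB'eq]
        have hmul : (1/(M.card:ℝ)) * ((L + gap x j)/2) ≤ (1/2) * ((L + gap x j)/2) :=
          mul_le_mul_of_nonneg_right h1M (by linarith [hg0 j])
        linarith
      · -- both gaps zero
        have hA'eq : A' = L := by rw [hA'def, if_neg (by rw [← hA]; exact lt_irrefl 0)]
        have hB'eq : B' = L := by rw [hB'def, if_neg (by rw [← hB]; exact lt_irrefl 0)]
        have hsubM : ({k, j, j+1} : Finset (Fin n)) ⊆ M := by
          refine Finset.insert_subset_iff.mpr ⟨hkM hA.symm, ?_⟩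
          exact Finset.insert_subset_iff.mpr
            ⟨hjM, Finset.singleton_subset_iff.mpr (hj1M hB.symm)⟩
        have hcard3 : ({k, j, j+1} : Finset (Fin n)).card = 3 := by
          rw [Finset.card_insert_of_notMem (by simp [hkj, hkj1]),
            Finset.card_insert_of_notMem (by simp [hjj1]), Finset.card_singleton]
        have hM3 : (3:ℝ) ≤ (M.card:ℝ) := by
          exact_mod_cast hcard3 ▸ Finset.card_le_card hsubM
        have h1M : 1/(M.card:ℝ) ≤ 1/3 := one_div_le_one_div_of_le (by norm_num) hM3
        rw [hA'eq, hB'eq]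
        have hmul : (1/(M.card:ℝ)) * ((L + L)/2) ≤ (1/3) * ((L + L)/2) :=
          mul_le_mul_of_nonneg_right h1M (by linarith)
        linarith
    calc profit j x = ∫ y in Ioc (0:ℝ) 1, rho x j y := by
          rw [profit, intervalIntegral.integral_of_le zero_le_one]
      _ ≤ ∫ y in Ioc (0:ℝ) 1, (1/(M.card:ℝ)) * S.indicator (fun _ => (1:ℝ)) y := h2
      _ = (1/(M.card:ℝ)) * (volume (S ∩ Ioc (0:ℝ) 1)).toReal := h3
      _ ≤ (1/(M.card:ℝ)) * ((x j + B'/2) - (x j - A'/2)) :=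
          mul_le_mul_of_nonneg_left hclip (one_div_nonneg.mpr (Nat.cast_nonneg _))
      _ < L/2 := hfinal
  exact ⟨j, x', hx'mem, ⟨l, hl, by rw [hx'def]; linarith, by rw [hNg, hx'def]; linarith⟩,
    lt_of_lt_of_le hold hnew⟩
end
end

section
/- Suppose n vendors (n ≥ 4) are located on the circle with exactly two vendors at each of n/2 distinct points (n even), and the distinct points are equally spaced. Then this location is an equilibrium, and every vendor earns profit 1/n. -/
noncomputable section

open scoped Classical

namespace PE

open Set MeasureTheory

def D (a b : ℝ) : ℝ := min |a - b| (1 - |a - b|)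

lemma circleDist_eq_D {a b : ℝ} (h : |a - b| ≤ 1) : circleDist a b = D a b := by
  obtain ⟨hl, hr⟩ := abs_le.mp h
  unfold circleDist D
  rcases le_total (a - b) 0 with hd | hd
  · rw [abs_of_nonpos hd, abs_of_nonneg (by linarith : (0:ℝ) ≤ a - b + 1),
      abs_of_nonpos (by linarith : a - b - 1 ≤ 0)]
    simp only [min_def]; split_ifs <;> linarith
  · rw [abs_of_nonneg hd, abs_of_nonneg (by linarith : (0:ℝ) ≤ a - b + 1),
      abs_of_nonpos (by linarith : a - b - 1 ≤ 0)]
    simp only [min_def]; split_ifs <;> linarith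

lemma D_symm (a b : ℝ) : D a b = D b a := by unfold D; rw [abs_sub_comm]

lemma D_triangle {a b c : ℝ} (ha : a ∈ Icc (0:ℝ) 1) (hb : b ∈ Icc (0:ℝ) 1)
    (hc : c ∈ Icc (0:ℝ) 1) : D a c ≤ D a b + D b c := by
  obtain ⟨ha0, ha1⟩ := ha; obtain ⟨hb0, hb1⟩ := hb; obtain ⟨hc0, hc1⟩ := hc
  unfold D
  rcases min_cases |a - b| (1 - |a - b|) with ⟨e1, _⟩ | ⟨e1, _⟩ <;>
    rcases min_cases |b - c| (1 - |b - c|) with ⟨e2, _⟩ | ⟨e2, _⟩ <;> rw [e1, e2]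
  · exact le_trans (min_le_left _ _) (abs_sub_le a b c)
  · refine le_trans (min_le_right _ _) ?_
    have h1 := abs_sub_le b a c; rw [abs_sub_comm b a] at h1; linarith
  · refine le_trans (min_le_right _ _) ?_
    have h1 := abs_sub_le a c b; rw [abs_sub_comm c b] at h1; linarith
  · refine le_trans (min_le_left _ _) ?_
    rcases abs_cases (a-b) with ⟨f1,_⟩|⟨f1,_⟩ <;> rcases abs_cases (b-c) with ⟨f2,_⟩|⟨f2,_⟩ <;>
      rcases abs_cases (a-c) with ⟨f3,_⟩|⟨f3,_⟩ <;> linarith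

lemma D_nonneg {a b : ℝ} (h : |a - b| ≤ 1) : 0 ≤ D a b :=
  le_min (abs_nonneg _) (by linarith)

def g (n m : ℕ) : ℝ := (m : ℝ) * 2 / n

variable {n : ℕ}

lemma npos (hn : 4 ≤ n) : (0:ℝ) < n := by
  have : (4:ℝ) ≤ n := by exact_mod_cast hn
  linarith

lemma hcast (hev : Even n) : ((n/2 : ℕ) : ℝ) * 2 = n := by
  exact_mod_cast congrArg (Nat.cast : ℕ → ℝ) (Nat.div_mul_cancel hev.two_dvd)

lemma g_le {m : ℕ} (hn : 4 ≤ n) (hev : Even n) (hm : m < n/2) : g n m ≤ 1 - 2/n := by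
  have h2 : ((m:ℝ) + 1) ≤ ((n/2 : ℕ) : ℝ) := by exact_mod_cast hm
  have h0 := npos hn
  have hc := hcast hev
  unfold g
  rw [div_le_iff₀ h0, sub_mul, div_mul_cancel₀ _ h0.ne']
  nlinarith

lemma g_mem {m : ℕ} (hn : 4 ≤ n) (hev : Even n) (hm : m < n/2) : g n m ∈ Icc (0:ℝ) 1 := by
  have h0 := npos hn
  have h1 : (0:ℝ) < 2/n := by positivity
  refine ⟨by unfold g; positivity, by linarith [g_le hn hev hm]⟩

lemma Dgrid {m m' : ℕ} (hn : 4 ≤ n) (hev : Even n) (hm : m < n/2) (hm' : m' < n/2)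
    (hne : m ≠ m') : 2/(n:ℝ) ≤ D (g n m) (g n m') := by
  have h0 := npos hn
  have hc := hcast hev
  have habs : |g n m - g n m'| = |(m:ℝ) - m'| * 2 / n := by
    unfold g; rw [div_sub_div_same, ← sub_mul, abs_div, abs_mul]
    simp [abs_of_nonneg h0.le]
  have hz : (m:ℤ) ≠ (m':ℤ) := by exact_mod_cast hne
  have h1 : (1:ℝ) ≤ |(m:ℝ) - m'| := by
    have := Int.one_le_abs (sub_ne_zero.mpr hz)
    have hcast2 : |(m:ℝ) - m'| = ((|(m:ℤ) - m'| : ℤ) : ℝ) := by push_cast; rfl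
    rw [hcast2]; exact_mod_cast this
  have hm2 : (m:ℝ) + 1 ≤ ((n/2:ℕ):ℝ) := by exact_mod_cast hm
  have hm2' : (m':ℝ) + 1 ≤ ((n/2:ℕ):ℝ) := by exact_mod_cast hm'
  have hm0 : (0:ℝ) ≤ (m:ℝ) := Nat.cast_nonneg m
  have hm0' : (0:ℝ) ≤ (m':ℝ) := Nat.cast_nonneg m'
  have hup : |(m:ℝ) - m'| ≤ ((n/2:ℕ):ℝ) - 1 := abs_le.mpr ⟨by linarith, by linarith⟩
  refine le_min ?_ ?_
  · rw [habs, div_le_div_iff₀ h0 h0]; nlinarith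
  · rw [div_le_iff₀ h0]
    have hd : |g n m - g n m'| * n = |(m:ℝ) - m'| * 2 := by rw [habs]; field_simp
    nlinarith

lemma SEP {m m' : ℕ} {y : ℝ} (hn : 4 ≤ n) (hev : Even n) (hm : m < n/2) (hm' : m' < n/2)
    (hne : m ≠ m') (hy : y ∈ Icc (0:ℝ) 1) (hlt : D (g n m) y < 1/n) :
    D (g n m) y < D (g n m') y := by
  have h0 := npos hn
  have ht := D_triangle (g_mem hn hev hm') hy (g_mem hn hev hm)
  rw [D_symm y (g n m)] at ht
  have h2 := Dgrid hn hev hm' hm (Ne.symm hne)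
  have : 1/(n:ℝ) + 1/n = 2/n := by ring
  linarith

lemma COVER {y : ℝ} (hn : 4 ≤ n) (hev : Even n) (hy : y ∈ Icc (0:ℝ) 1) :
    ∃ m, m < n/2 ∧ D (g n m) y ≤ 1/n := by
  have h0 := npos hn
  have hc := hcast hev
  obtain ⟨hy0, hy1⟩ := hy
  set m0 := ⌊(y * n + 1)/2⌋₊ with hm0
  have hfl : (m0:ℝ) ≤ (y * n + 1)/2 := Nat.floor_le (by positivity)
  have hfu : (y * n + 1)/2 < m0 + 1 := Nat.lt_floor_add_one _
  have hN2 : (0:ℕ) < n/2 := by omega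
  rcases Nat.lt_or_ge m0 (n/2) with hlt | hge
  · refine ⟨m0, hlt, ?_⟩
    have key1 : (m0:ℝ)*2 ≤ y*n + 1 := by linarith
    have key2 : y*n - 1 ≤ (m0:ℝ)*2 := by linarith
    have : |g n m0 - y| ≤ 1/n := by
      have h1 : g n m0 - y = ((m0:ℝ)*2 - y*n)/n := by unfold g; field_simp
      rw [h1, abs_div, abs_of_pos h0]
      gcongr
      rw [abs_le]
      constructor <;> linarith
    calc D (g n m0) y ≤ |g n m0 - y| := min_le_left _ _
      _ ≤ 1/n := this
  · refine ⟨0, hN2, ?_⟩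
    have hcm : ((n/2:ℕ):ℝ) ≤ m0 := by exact_mod_cast hge
    have hyl : 1 - 1/n ≤ y := by
      -- (n/2) ≤ (y*n+1)/2  → n ≤ y*n + 1 → y ≥ 1 - 1/n
      have : ((n/2:ℕ):ℝ) ≤ (y*n+1)/2 := le_trans hcm hfl
      rw [le_div_iff₀ (by norm_num : (0:ℝ) < 2)] at this
      have h3 : (n:ℝ) ≤ y * n + 1 := by linarith [hc]
      have hinv : (1/(n:ℝ))*n = 1 := by field_simp
      nlinarith
    have : D (g n 0) y ≤ 1 - |g n 0 - y| := min_le_right _ _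
    have hg0 : g n 0 = 0 := by unfold g; simp
    rw [hg0] at this ⊢
    have : |(0:ℝ) - y| = y := by rw [abs_sub_comm]; simp [abs_of_nonneg hy0]
    calc D 0 y ≤ 1 - |(0:ℝ) - y| := min_le_right _ _
      _ = 1 - y := by rw [this]
      _ ≤ 1/n := by linarith

/-- the paired configuration -/
def px (n : ℕ) : Fin n → ℝ := fun i => (((i : ℕ) / 2 : ℕ) : ℝ) * 2 / n

lemma px_eq (i : Fin n) : px n i = g n ((i : ℕ)/2) := rfl

lemma idx_lt (hev : Even n) (i : Fin n) : (i : ℕ)/2 < n/2 := by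
  have h2 := i.isLt
  have := Nat.even_iff.mp hev
  omega

lemma cd_eq {a y : ℝ} (ha : a ∈ Icc (0:ℝ) 1) (hy : y ∈ Icc (0:ℝ) 1) :
    circleDist a y = D a y := by
  apply circleDist_eq_D
  rw [abs_le]
  constructor <;> [linarith [ha.1, hy.2]; linarith [ha.2, hy.1]]

lemma mem_nearest {ξ : Fin n → ℝ} {y : ℝ} {j : Fin n} :
    j ∈ nearest ξ y ↔ ∀ i, circleDist (ξ j) y ≤ circleDist (ξ i) y := by
  simp [nearest]

lemma pair_filter_card (hn : 4 ≤ n) (hev : Even n) {M : ℕ} (hM : M < n/2) :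
    (Finset.univ.filter (fun j : Fin n => (j : ℕ)/2 = M)).card = 2 := by
  have hb : 2*M+1 < n := by have := Nat.even_iff.mp hev; omega
  have ha : 2*M < n := by omega
  have : (Finset.univ.filter (fun j : Fin n => (j : ℕ)/2 = M))
      = {⟨2*M, ha⟩, ⟨2*M+1, hb⟩} := by
    ext j
    simp only [Finset.mem_filter, Finset.mem_univ, true_and, Finset.mem_insert,
      Finset.mem_singleton, Fin.ext_iff]
    omega
  rw [this, Finset.card_insert_of_notMem (by simp [Fin.ext_iff]), Finset.card_singleton]

lemma nearest_pair (hn : 4 ≤ n) (hev : Even n) {y : ℝ} (hy : y ∈ Icc (0:ℝ) 1)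
    {M : ℕ} (hM : M < n/2) (hD : D (g n M) y < 1/n) :
    nearest (px n) y = Finset.univ.filter (fun j : Fin n => (j : ℕ)/2 = M) := by
  have hcd : ∀ i : Fin n, circleDist (px n i) y = D (g n ((i:ℕ)/2)) y := fun i =>
    cd_eq (g_mem hn hev (idx_lt hev i)) hy
  ext j
  simp only [mem_nearest, Finset.mem_filter, Finset.mem_univ, true_and]
  constructor
  · intro H
    by_contra hne
    have hs := SEP hn hev hM (idx_lt hev j) (fun h => hne h.symm) hy hD
    have hb : 2*M < n := by have := Nat.even_iff.mp hev; omega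
    have := H ⟨2*M, hb⟩
    rw [hcd j, hcd ⟨2*M, hb⟩] at this
    simp only at this
    have h2 : (2*M)/2 = M := by omega
    rw [h2] at this
    linarith
  · intro hjM i
    rw [hcd j, hcd i, hjM]
    by_cases h : (i:ℕ)/2 = M
    · rw [h]
    · exact (SEP hn hev hM (idx_lt hev i) (fun hh => h hh.symm) hy hD).le

lemma rho_near (hn : 4 ≤ n) (hev : Even n) {y : ℝ} (hy : y ∈ Icc (0:ℝ) 1)
    (k : Fin n) (hD : D (g n ((k:ℕ)/2)) y < 1/n) :
    rho (px n) k y = 1/2 := by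
  have hM := idx_lt hev k
  rw [rho, nearest_pair hn hev hy hM hD, pair_filter_card hn hev hM, if_pos]
  · norm_num
  · simp

lemma rho_far (hn : 4 ≤ n) (hev : Even n) {y : ℝ} (hy : y ∈ Icc (0:ℝ) 1)
    (k : Fin n) (hD : 1/(n:ℝ) < D (g n ((k:ℕ)/2)) y) :
    rho (px n) k y = 0 := by
  obtain ⟨m, hm, hDm⟩ := COVER hn hev hy
  have hb : 2*m < n := by have := Nat.even_iff.mp hev; omega
  rw [rho, if_neg]
  intro hmem
  rw [mem_nearest] at hmem
  have := hmem ⟨2*m, hb⟩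
  have hcd : ∀ i : Fin n, circleDist (px n i) y = D (g n ((i:ℕ)/2)) y := fun i =>
    cd_eq (g_mem hn hev (idx_lt hev i)) hy
  rw [hcd k, hcd ⟨2*m, hb⟩] at this
  simp only at this
  have h2 : (2*m)/2 = m := by omega
  rw [h2] at this
  linarith

lemma ind_integrableOn (s : Set ℝ) (hs : MeasurableSet s) :
    IntegrableOn (s.indicator (fun _ => (1:ℝ))) (Ioc (0:ℝ) 1) := by
  apply Integrable.indicator _ hs
  apply (integrableOn_const_iff (C := (1:ℝ))).mpr
  right
  rw [Real.volume_Ioc]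
  norm_num

lemma ind_intervalIntegrable (s : Set ℝ) (hs : MeasurableSet s) :
    IntervalIntegrable (s.indicator (fun _ => (1:ℝ))) volume 0 1 := by
  constructor
  · exact ind_integrableOn s hs
  · rw [Set.Ioc_eq_empty (by norm_num)]
    exact integrableOn_empty

lemma ind_integral (s : Set ℝ) (hs : MeasurableSet s) :
    ∫ y in Ioc (0:ℝ) 1, s.indicator (fun _ => (1:ℝ)) y = (volume (s ∩ Ioc 0 1)).toReal := by
  rw [MeasureTheory.integral_indicator hs, Measure.restrict_restrict hs, setIntegral_const]
  simp
  rfl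

lemma ae_notin_finite (B : Set ℝ) (hB : B.Finite) : ∀ᵐ (y : ℝ), y ∉ B := by
  rw [MeasureTheory.ae_iff]
  have : {a : ℝ | ¬ a ∉ B} = B := by ext z; simp
  rw [this]
  exact hB.measure_zero _

lemma profit_px (hn : 4 ≤ n) (hev : Even n) (k : Fin n) : profit k (px n) = 1/n := by
  have h0 := npos hn
  have hn4 : (4:ℝ) ≤ n := by exact_mod_cast hn
  set M := (k:ℕ)/2 with hM
  set p := g n M with hp
  have hMlt : M < n/2 := idx_lt hev k
  have hp0 : 0 ≤ p := by rw [hp]; unfold g; positivity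
  have hple : p ≤ 1 - 2/n := g_le hn hev hMlt
  have hni : (0:ℝ) < 1/n := by positivity
  have h21 : 2/(n:ℝ) = 2*(1/n) := by ring
  have hn2 : 1/(n:ℝ) ≤ 1 - 1/n := by
    rw [le_sub_iff_add_le, ← add_div, div_le_one h0]; linarith
  set i1 : Set ℝ := Ioo (p - 1/n) (p + 1/n) with hi1
  set i2 : Set ℝ := Ioo (p + 1 - 1/n) (p + 1 + 1/n) with hi2
  set gfun : ℝ → ℝ := fun y => 2⁻¹ * (i1.indicator (fun _ => (1:ℝ)) y
      + i2.indicator (fun _ => (1:ℝ)) y) with hgfun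
  have hcongr : profit k (px n) = ∫ y in (0:ℝ)..1, gfun y := by
    apply intervalIntegral.integral_congr_ae
    have hB := ae_notin_finite {p - 1/n, p + 1/n, p + 1 - 1/n, p - 1 + 1/n}
      (Set.toFinite _)
    filter_upwards [hB] with y hyB hyI
    rw [Set.uIoc_of_le (by norm_num : (0:ℝ) ≤ 1)] at hyI
    have hy : y ∈ Icc (0:ℝ) 1 := ⟨hyI.1.le, hyI.2⟩
    have hy0 : (0:ℝ) ≤ y := hy.1
    have hy1 : y ≤ 1 := hy.2
    simp only [mem_insert_iff, mem_singleton_iff, not_or] at hyB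
    obtain ⟨hb1, hb2, hb3, hb4⟩ := hyB
    rcases lt_trichotomy (D p y) (1/n) with hlt | heq | hgt
    · rw [rho_near hn hev hy k hlt]
      rcases min_lt_iff.mp hlt with ha | ha
      · -- |p - y| < 1/n
        have hy1 : y ∈ i1 := by
          rw [hi1, mem_Ioo]; rw [abs_lt] at ha; constructor <;> linarith
        have hy2 : y ∉ i2 := by
          rw [hi2, mem_Ioo]; rw [abs_lt] at ha; intro ⟨c1, c2⟩; linarith [hy.2]
        rw [hgfun]; simp only [Set.indicator_of_mem hy1, Set.indicator_of_notMem hy2]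
        norm_num
      · -- 1 - |p - y| < 1/n
        have habs : 1 - 1/n < |p - y| := by linarith
        have hyp : 1 - 1/n < y - p := by
          rcases abs_cases (p - y) with ⟨e, _⟩ | ⟨e, _⟩
          · exfalso; rw [e] at habs; linarith [hy.1]
          · rw [e] at habs; linarith
        have hy2 : y ∈ i2 := by
          rw [hi2, mem_Ioo]; constructor <;> linarith [hy.2]
        have hy1 : y ∉ i1 := by
          rw [hi1, mem_Ioo]; intro ⟨c1, c2⟩; linarith
        rw [hgfun]; simp only [Set.indicator_of_mem hy2, Set.indicator_of_notMem hy1]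
        norm_num
    · exfalso
      rcases min_eq_iff.mp heq with ⟨e, _⟩ | ⟨e, _⟩
      · rcases abs_cases (p - y) with ⟨f, _⟩ | ⟨f, _⟩ <;> rw [f] at e
        · exact hb1 (by linarith)
        · exact hb2 (by linarith)
      · have e2 : |p - y| = 1 - 1/n := by linarith
        rcases abs_cases (p - y) with ⟨f, _⟩ | ⟨f, _⟩ <;> rw [f] at e2
        · exact hb4 (by linarith)
        · exact hb3 (by linarith)
    · rw [rho_far hn hev hy k hgt]
      have hy1 : y ∉ i1 := by
        rw [hi1, mem_Ioo]; intro ⟨c1, c2⟩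
        have : |p - y| < 1/n := abs_lt.mpr ⟨by linarith, by linarith⟩
        have : D p y < 1/n := lt_of_le_of_lt (min_le_left _ _) this
        linarith
      have hy2 : y ∉ i2 := by
        rw [hi2, mem_Ioo]; intro ⟨c1, c2⟩
        have h5 : 1 - 1/n < y - p := by linarith
        have h6 : |p - y| > 1 - 1/n := by rw [abs_sub_comm]; rw [abs_of_pos (by linarith)]; linarith
        have : D p y < 1/n := lt_of_le_of_lt (min_le_right _ _) (by linarith)
        linarith
      rw [hgfun]; simp only [Set.indicator_of_notMem hy1, Set.indicator_of_notMem hy2]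
      norm_num
  rw [hcongr]
  rw [intervalIntegral.integral_of_le (by norm_num : (0:ℝ) ≤ 1)]
  rw [hgfun]
  simp only
  rw [MeasureTheory.integral_const_mul]  -- might be integral_const_mul
  rw [MeasureTheory.integral_add (ind_intervalIntegrable i1 measurableSet_Ioo).1
    (ind_intervalIntegrable i2 measurableSet_Ioo).1]
  rw [ind_integral i1 measurableSet_Ioo, ind_integral i2 measurableSet_Ioo]
  rcases Nat.eq_zero_or_pos M with hM0 | hM1
  · have hpz : p = 0 := by rw [hp, hM0]; unfold g; simp
    have e1 : i1 ∩ Ioc 0 1 = Ioo (0:ℝ) (1/n) := by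
      rw [hi1, hpz]; ext z
      simp only [mem_inter_iff, mem_Ioo, mem_Ioc]
      constructor
      · rintro ⟨⟨a1, a2⟩, a3, a4⟩; exact ⟨a3, by linarith⟩
      · rintro ⟨a1, a2⟩; exact ⟨⟨by linarith, by linarith⟩, a1, by linarith⟩
    have e2 : i2 ∩ Ioc 0 1 = Ioc (1 - 1/(n:ℝ)) 1 := by
      rw [hi2, hpz]; ext z
      simp only [mem_inter_iff, mem_Ioo, mem_Ioc]
      constructor
      · rintro ⟨⟨a1, a2⟩, a3, a4⟩; exact ⟨by linarith, a4⟩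
      · rintro ⟨a1, a2⟩; exact ⟨⟨by linarith, by linarith⟩, by linarith, a2⟩
    rw [e1, e2, Real.volume_Ioo, Real.volume_Ioc]
    rw [ENNReal.toReal_ofReal (by linarith), ENNReal.toReal_ofReal (by linarith)]
    field_simp
    ring
  · have hp2 : 2/n ≤ p := by
      rw [hp]; unfold g
      rw [le_div_iff₀ h0, div_mul_cancel₀ _ h0.ne']
      have : (1:ℝ) ≤ M := by exact_mod_cast hM1
      nlinarith
    have e1 : i1 ∩ Ioc 0 1 = Ioo (p - 1/n) (p + 1/n) := by
      rw [hi1]; apply inter_eq_left.mpr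
      intro z hz
      rw [mem_Ioo] at hz
      exact ⟨by linarith [hz.1], by linarith [hz.2]⟩
    have e2 : i2 ∩ Ioc 0 1 = (∅ : Set ℝ) := by
      rw [hi2]; ext z
      simp only [mem_inter_iff, mem_Ioo, mem_Ioc, mem_empty_iff_false, iff_false, not_and]
      rintro ⟨a1, a2⟩ a3 
      linarith
    rw [e1, e2, Real.volume_Ioo]
    simp only [measure_empty, ENNReal.toReal_zero]
    rw [ENNReal.toReal_ofReal (by linarith)]
    field_simp
    ring

lemma nearest_D {ξ : Fin n → ℝ} (hξ : ∀ i, ξ i ∈ Icc (0:ℝ) 1) {y : ℝ}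
    (hy : y ∈ Icc (0:ℝ) 1) {j : Fin n} (hj : j ∈ nearest ξ y) (i : Fin n) :
    D (ξ j) y ≤ D (ξ i) y := by
  rw [← cd_eq (hξ j) hy, ← cd_eq (hξ i) hy]
  exact mem_nearest.mp hj i

lemma nearest_D_le (hn : 4 ≤ n) (hev : Even n) {ξ : Fin n → ℝ}
    (hξ : ∀ i, ξ i ∈ Icc (0:ℝ) 1) (k : Fin n)
    (hocc : ∀ m, m < n/2 → ∃ i, i ≠ k ∧ ξ i = g n m) {y : ℝ}
    (hy : y ∈ Icc (0:ℝ) 1) (hk : k ∈ nearest ξ y) : D (ξ k) y ≤ 1/n := by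
  obtain ⟨m, hm, hDm⟩ := COVER hn hev hy
  obtain ⟨i, _, hi⟩ := hocc m hm
  calc D (ξ k) y ≤ D (ξ i) y := nearest_D hξ hy hk i
    _ = D (g n m) y := by rw [hi]
    _ ≤ 1/n := hDm

lemma occ (hev : Even n) (k : Fin n) (x' : ℝ) :
    ∀ m, m < n/2 → ∃ i : Fin n, i ≠ k ∧ Function.update (px n) k x' i = g n m := by
  intro m hm
  have hb : 2*m+1 < n := by have := Nat.even_iff.mp hev; omega
  have ha : 2*m < n := by omega
  have hval : ∀ i : Fin n, i ≠ k → Function.update (px n) k x' i = g n ((i:ℕ)/2) :=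
    fun i hi => by rw [Function.update_of_ne hi]; rfl
  by_cases hk : (⟨2*m, ha⟩ : Fin n) = k
  · refine ⟨⟨2*m+1, hb⟩, ?_, ?_⟩
    · rw [← hk]; simp [Fin.ext_iff]
    · rw [hval _ (by rw [← hk]; simp [Fin.ext_iff])]
      congr 1
      simp only [Fin.val_mk]
      omega
  · refine ⟨⟨2*m, ha⟩, hk, ?_⟩
    rw [hval _ hk]
    congr 1
    simp only [Fin.val_mk]
    omega

lemma rho_nonneg {ξ : Fin n → ℝ} (k : Fin n) (y : ℝ) : 0 ≤ rho ξ k y := by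
  rw [rho]; split
  · positivity
  · exact le_refl 0

lemma dev_A (hn : 4 ≤ n) (hev : Even n) {ξ : Fin n → ℝ}
    (hξ : ∀ i, ξ i ∈ Icc (0:ℝ) 1) (k : Fin n)
    (hocc : ∀ m, m < n/2 → ∃ i, i ≠ k ∧ ξ i = g n m) {m : ℕ} (hm : m < n/2)
    (heq : ∀ y ∈ Icc (0:ℝ) 1, D (ξ k) y = D (g n m) y)
    (hInt : IntervalIntegrable (rho ξ k) volume 0 1) :
    profit k ξ ≤ 1/n := by
  have h0 := npos hn
  have hn4 : (4:ℝ) ≤ n := by exact_mod_cast hn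
  have hni : (0:ℝ) < 1/n := by positivity
  have h21 : 2/(n:ℝ) = 2*(1/n) := by ring
  set p := g n m with hp
  have hp0 : 0 ≤ p := (g_mem hn hev hm).1
  have hple : p ≤ 1 - 2/n := g_le hn hev hm
  set s1 : Set ℝ := Icc (p - 1/n) (p + 1/n) with hs1
  set s2 : Set ℝ := Icc (p + 1 - 1/n) (p + 1 + 1/n) with hs2
  set bfun : ℝ → ℝ := fun y => 2⁻¹ * (s1.indicator (fun _ => (1:ℝ)) y
      + s2.indicator (fun _ => (1:ℝ)) y) with hbfun
  have hbInt : IntervalIntegrable bfun volume 0 1 :=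
    ((ind_intervalIntegrable s1 measurableSet_Icc).add
      (ind_intervalIntegrable s2 measurableSet_Icc)).const_mul 2⁻¹
  have hpt : ∀ y ∈ Icc (0:ℝ) 1, rho ξ k y ≤ bfun y := by
    intro y hy
    have hind1 : (0:ℝ) ≤ s1.indicator (fun _ => (1:ℝ)) y :=
      Set.indicator_nonneg (fun _ _ => by norm_num) y
    have hind2 : (0:ℝ) ≤ s2.indicator (fun _ => (1:ℝ)) y :=
      Set.indicator_nonneg (fun _ _ => by norm_num) y
    by_cases hk : k ∈ nearest ξ y
    · obtain ⟨i₀, hik, hi0⟩ := hocc m hm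
      have hi0mem : i₀ ∈ nearest ξ y := by
        rw [mem_nearest]
        intro i
        rw [cd_eq (hξ i₀) hy, cd_eq (hξ i) hy, hi0, ← heq y hy]
        exact nearest_D hξ hy hk i
      have hcard : 2 ≤ (nearest ξ y).card := by
        have hsub : ({k, i₀} : Finset (Fin n)) ⊆ nearest ξ y := by
          intro j hj
          rcases Finset.mem_insert.mp hj with h | h
          · exact h ▸ hk
          · exact (Finset.mem_singleton.mp h) ▸ hi0mem
        calc 2 = ({k, i₀} : Finset (Fin n)).card := (Finset.card_pair hik.symm).symm
          _ ≤ _ := Finset.card_le_card hsub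
      have hrho : rho ξ k y = 1/(nearest ξ y).card := by rw [rho, if_pos hk]
      have hrho2 : rho ξ k y ≤ 1/2 := by
        rw [hrho]
        apply one_div_le_one_div_of_le (by norm_num)
        exact_mod_cast hcard
      have hDp : D p y ≤ 1/n := by
        rw [← heq y hy]
        exact nearest_D_le hn hev hξ k hocc hy hk
      have hmem : y ∈ s1 ∨ y ∈ s2 := by
        rcases min_le_iff.mp hDp with ha | ha
        · left
          rw [hs1, mem_Icc]
          rw [abs_le] at ha
          constructor <;> linarith
        · right
          have habs : 1 - 1/n ≤ |p - y| := by linarith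
          have hyp : 1 - 1/n ≤ y - p := by
            rcases abs_cases (p - y) with ⟨e, _⟩ | ⟨e, _⟩
            · exfalso; rw [e] at habs; linarith [hy.1]
            · rw [e] at habs; linarith
          rw [hs2, mem_Icc]
          constructor <;> linarith [hy.2]
      have hb2 : (1:ℝ)/2 ≤ bfun y := by
        rcases hmem with h | h
        · rw [hbfun]; simp only [Set.indicator_of_mem h]; linarith
        · rw [hbfun]; simp only [Set.indicator_of_mem h]; linarith
      linarith
    · rw [rho, if_neg hk]
      rw [hbfun]
      positivity
  have hmono := intervalIntegral.integral_mono_on (by norm_num : (0:ℝ) ≤ 1) hInt hbInt hpt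
  refine le_trans hmono ?_
  rw [intervalIntegral.integral_of_le (by norm_num : (0:ℝ) ≤ 1)]
  rw [hbfun]
  simp only
  rw [MeasureTheory.integral_const_mul]
  rw [MeasureTheory.integral_add (ind_intervalIntegrable s1 measurableSet_Icc).1
    (ind_intervalIntegrable s2 measurableSet_Icc).1]
  rw [ind_integral s1 measurableSet_Icc, ind_integral s2 measurableSet_Icc]
  rcases Nat.eq_zero_or_pos m with hM0 | hM1
  · have hpz : p = 0 := by rw [hp, hM0]; unfold g; simp
    have e1 : s1 ∩ Ioc 0 1 = Ioc (0:ℝ) (1/n) := by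
      rw [hs1, hpz]; ext z
      simp only [mem_inter_iff, mem_Icc, mem_Ioc]
      constructor
      · rintro ⟨⟨a1, a2⟩, a3, a4⟩; exact ⟨a3, by linarith⟩
      · rintro ⟨a1, a2⟩; exact ⟨⟨by linarith, by linarith⟩, a1, by linarith⟩
    have e2 : s2 ∩ Ioc 0 1 = Icc (1 - 1/(n:ℝ)) 1 := by
      rw [hs2, hpz]; ext z
      simp only [mem_inter_iff, mem_Icc, mem_Ioc]
      constructor
      · rintro ⟨⟨a1, a2⟩, a3, a4⟩; exact ⟨by linarith, a4⟩
      · rintro ⟨a1, a2⟩; exact ⟨⟨by linarith, by linarith⟩, by linarith, a2⟩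
    rw [e1, e2, Real.volume_Ioc, Real.volume_Icc]
    rw [ENNReal.toReal_ofReal (by linarith), ENNReal.toReal_ofReal (by linarith)]
    rw [le_div_iff₀ h0]
    field_simp
    linarith
  · have hp2 : 2/(n:ℝ) ≤ p := by
      rw [hp]; unfold g
      rw [div_le_div_iff₀ h0 h0]
      have : (1:ℝ) ≤ m := by exact_mod_cast hM1
      nlinarith
    have e2 : s2 ∩ Ioc 0 1 = (∅ : Set ℝ) := by
      rw [hs2]; ext z
      simp only [mem_inter_iff, mem_Icc, mem_Ioc, mem_empty_iff_false, iff_false, not_and]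
      rintro ⟨a1, a2⟩ a3
      linarith
    rw [e2]
    simp only [measure_empty, ENNReal.toReal_zero, add_zero]
    have hle : (volume (s1 ∩ Ioc 0 1)).toReal ≤ 2/n := by
      have h1 : volume (s1 ∩ Ioc 0 1) ≤ volume s1 := measure_mono inter_subset_left
      have h2 : volume s1 = ENNReal.ofReal (2/n) := by
        rw [hs1, Real.volume_Icc]
        congr 1
        ring
      rw [h2] at h1
      calc (volume (s1 ∩ Ioc 0 1)).toReal ≤ (ENNReal.ofReal (2/n)).toReal :=
            ENNReal.toReal_mono ENNReal.ofReal_ne_top h1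
        _ = 2/n := ENNReal.toReal_ofReal (by positivity)
    linarith

lemma dev_B (hn : 4 ≤ n) (hev : Even n) {ξ : Fin n → ℝ}
    (hξ : ∀ i, ξ i ∈ Icc (0:ℝ) 1) (k : Fin n)
    (hocc : ∀ m, m < n/2 → ∃ i, i ≠ k ∧ ξ i = g n m)
    {l r : ℝ} (hl0 : 0 ≤ l) (hlx : l < ξ k) (hxr : ξ k < r) (hr1 : r ≤ 1)
    (hrl : r - l = 2/n)
    (hil : ∃ i, ∀ y ∈ Icc (0:ℝ) 1, D (ξ i) y = D l y)
    (hir : ∃ i, ∀ y ∈ Icc (0:ℝ) 1, D (ξ i) y = D r y)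
    (hInt : IntervalIntegrable (rho ξ k) volume 0 1) :
    profit k ξ ≤ 1/n := by
  have h0 := npos hn
  have hn4 : (4:ℝ) ≤ n := by exact_mod_cast hn
  have hni : (0:ℝ) < 1/n := by positivity
  have hn14 : 1/(n:ℝ) ≤ 1/4 := by
    rw [div_le_div_iff₀ h0 (by norm_num : (0:ℝ) < 4)]; linarith
  set x' := ξ k with hx'
  have hx'mem := hξ k
  set s : Set ℝ := Icc ((l+x')/2) ((x'+r)/2) with hs
  set bfun : ℝ → ℝ := s.indicator (fun _ => (1:ℝ)) with hbfun
  have hbInt : IntervalIntegrable bfun volume 0 1 :=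
    ind_intervalIntegrable s measurableSet_Icc
  have hpt : ∀ y ∈ Icc (0:ℝ) 1, rho ξ k y ≤ bfun y := by
    intro y hy
    by_cases hk : k ∈ nearest ξ y
    · have hcard : 1 ≤ (nearest ξ y).card := Finset.card_pos.mpr ⟨k, hk⟩
      have hrho1 : rho ξ k y ≤ 1 := by
        rw [rho, if_pos hk]
        rw [div_le_one (by exact_mod_cast hcard)]
        exact_mod_cast hcard
      have hDx : D x' y ≤ 1/n := nearest_D_le hn hev hξ k hocc hy hk
      obtain ⟨il, hilp⟩ := hil
      obtain ⟨ir, hirp⟩ := hir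
      have hDl : D x' y ≤ D l y := by
        rw [← hilp y hy]; exact nearest_D hξ hy hk il
      have hDr : D x' y ≤ D r y := by
        rw [← hirp y hy]; exact nearest_D hξ hy hk ir
      have hmem : y ∈ s := by
        rw [hs, mem_Icc]
        rcases min_le_iff.mp hDx with ha | ha
        · have hDxe : D x' y = |x' - y| := min_eq_left (by linarith)
          constructor
          · by_contra hc
            push_neg at hc
            have hyx : y < x' := by linarith
            have e1 : |x' - y| = x' - y := abs_of_nonneg (by linarith)
            have hly : |l - y| < x' - y := by
              rcases le_total l y with h | h
              · rw [abs_sub_comm, abs_of_nonneg (by linarith)]; linarith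
              · rw [abs_of_nonneg (by linarith)]; linarith
            have : D l y < D x' y :=
              lt_of_le_of_lt (min_le_left _ _) (by rw [hDxe, e1]; exact hly)
            linarith
          · by_contra hc
            push_neg at hc
            have hyx : x' < y := by linarith
            have e1 : |x' - y| = y - x' := by
              rw [abs_sub_comm, abs_of_nonneg (by linarith)]
            have hry : |r - y| < y - x' := by
              rcases le_total r y with h | h
              · rw [abs_sub_comm, abs_of_nonneg (by linarith)]; linarith
              · rw [abs_of_nonneg (by linarith)]; linarith
            have : D r y < D x' y :=
              lt_of_le_of_lt (min_le_left _ _) (by rw [hDxe, e1]; exact hry)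
            linarith
        · exfalso
          have habs : 1 - 1/n ≤ |x' - y| := by linarith
          have hDxe : D x' y = 1 - |x' - y| := min_eq_right (by linarith)
          rcases le_total x' y with h | h
          · have e1 : |x' - y| = y - x' := by
              rw [abs_sub_comm, abs_of_nonneg (by linarith)]
            have hx's : x' ≤ 1/n := by linarith [hy.2]
            have hyl : l ≤ y := by linarith
            have hDl2 : D l y ≤ 1 - (y - l) := by
              calc D l y ≤ 1 - |l - y| := min_le_right _ _
                _ = 1 - (y - l) := by rw [abs_sub_comm, abs_of_nonneg (by linarith)]
            linarith
          · have e1 : |x' - y| = x' - y := abs_of_nonneg (by linarith)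
            have hx'b : 1 - 1/n ≤ x' := by linarith [hy.1]
            have hry : y ≤ r := by linarith
            have hDr2 : D r y ≤ 1 - (r - y) := by
              calc D r y ≤ 1 - |r - y| := min_le_right _ _
                _ = 1 - (r - y) := by rw [abs_of_nonneg (by linarith)]
            linarith
      rw [hbfun, Set.indicator_of_mem hmem]
      exact hrho1
    · rw [rho, if_neg hk, hbfun]
      exact Set.indicator_nonneg (fun _ _ => by norm_num) y
  have hmono := intervalIntegral.integral_mono_on (by norm_num : (0:ℝ) ≤ 1) hInt hbInt hpt
  refine le_trans hmono ?_
  rw [intervalIntegral.integral_of_le (by norm_num : (0:ℝ) ≤ 1), hbfun]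
  rw [ind_integral s measurableSet_Icc]
  have h1 : volume (s ∩ Ioc 0 1) ≤ volume s := measure_mono inter_subset_left
  have h2 : volume s = ENNReal.ofReal (1/n) := by
    rw [hs, Real.volume_Icc]
    congr 1
    rw [show (x'+r)/2 - (l+x')/2 = (r-l)/2 by ring, hrl]
    ring
  rw [h2] at h1
  calc (volume (s ∩ Ioc 0 1)).toReal ≤ (ENNReal.ofReal (1/n)).toReal :=
        ENNReal.toReal_mono ENNReal.ofReal_ne_top h1
    _ = 1/n := ENNReal.toReal_ofReal (by positivity)


lemma D01 {y : ℝ} (hy : y ∈ Icc (0:ℝ) 1) : D 1 y = D 0 y := by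
  unfold D
  rw [zero_sub, abs_neg, abs_of_nonneg hy.1, abs_of_nonneg (by linarith [hy.2] : (0:ℝ) ≤ 1 - y)]
  have e : 1 - (1 - y) = y := by ring
  rw [e, min_comm]

lemma dev_main (hn : 4 ≤ n) (hev : Even n) (k : Fin n) {x' : ℝ}
    (hx' : x' ∈ Icc (0:ℝ) 1) :
    profit k (Function.update (px n) k x') ≤ 1/n := by
  have h0 := npos hn
  have hc := hcast hev
  set ξ := Function.update (px n) k x' with hξdef
  have hξk : ξ k = x' := Function.update_self k x' (px n)
  have hξmem : ∀ i, ξ i ∈ Icc (0:ℝ) 1 := by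
    intro i
    by_cases h : i = k
    · subst h; rw [hξk]; exact hx'
    · rw [hξdef, Function.update_of_ne h]
      exact g_mem hn hev (idx_lt hev i)
  have hocc : ∀ m, m < n/2 → ∃ i, i ≠ k ∧ ξ i = g n m := occ hev k x'
  by_cases hInt : IntervalIntegrable (rho ξ k) volume 0 1
  swap
  · rw [profit, intervalIntegral.integral_undef hInt]
    positivity
  by_cases hx1 : x' = 1
  · refine dev_A hn hev hξmem k hocc (m := 0) (by omega) ?_ hInt
    intro y hy
    rw [hξk, hx1]
    have hg0 : g n 0 = 0 := by unfold g; simp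
    rw [hg0]
    exact D01 hy
  · have hx'lt : x' < 1 := lt_of_le_of_ne hx'.2 hx1
    set M := ⌊x' * n / 2⌋₊ with hMdef
    have hfl : (M:ℝ) ≤ x' * n / 2 := Nat.floor_le (div_nonneg (mul_nonneg hx'.1 h0.le) (by norm_num))
    have hfu : x' * n / 2 < M + 1 := Nat.lt_floor_add_one _
    have hMlt : M < n/2 := by
      have h1 : (M:ℝ) < ((n/2:ℕ):ℝ) := by
        calc (M:ℝ) ≤ x'*n/2 := hfl
          _ < ((n/2:ℕ):ℝ) := by nlinarith
      exact_mod_cast h1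
    have hl_le : g n M ≤ x' := by
      unfold g; rw [div_le_iff₀ h0]; nlinarith
    by_cases hxg : x' = g n M
    · refine dev_A hn hev hξmem k hocc hMlt ?_ hInt
      intro y hy
      rw [hξk, hxg]
    · have hlx : g n M < x' := lt_of_le_of_ne hl_le (Ne.symm hxg)
      set r : ℝ := ((M:ℝ)+1)*2/n with hr
      have hxr : x' < r := by rw [hr, lt_div_iff₀ h0]; nlinarith
      have hr1 : r ≤ 1 := by
        have h2 : (M:ℝ)+1 ≤ ((n/2:ℕ):ℝ) := by exact_mod_cast hMlt
        rw [hr, div_le_one h0]; nlinarith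
      have hrl : r - g n M = 2/n := by rw [hr]; unfold g; field_simp; ring
      have hil : ∃ i, ∀ y ∈ Icc (0:ℝ) 1, D (ξ i) y = D (g n M) y := by
        obtain ⟨i, _, hi⟩ := hocc M hMlt
        exact ⟨i, fun y _ => by rw [hi]⟩
      have hir : ∃ i, ∀ y ∈ Icc (0:ℝ) 1, D (ξ i) y = D r y := by
        rcases Nat.lt_or_ge (M+1) (n/2) with hM1 | hM1
        · obtain ⟨i, _, hi⟩ := hocc (M+1) hM1
          refine ⟨i, fun y _ => ?_⟩
          rw [hi]
          congr 1
          rw [hr]; unfold g; push_cast; ring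
        · have hMeq : M+1 = n/2 := le_antisymm hMlt hM1
          have hre : r = 1 := by
            have h3 : ((M:ℝ)+1) = ((n/2:ℕ):ℝ) := by exact_mod_cast hMeq
            rw [hr, h3, hc, div_self h0.ne']
          obtain ⟨i, _, hi⟩ := hocc 0 (by omega)
          refine ⟨i, fun y hy => ?_⟩
          rw [hi, hre]
          have hg0 : g n 0 = 0 := by unfold g; simp
          rw [hg0]
          exact (D01 hy).symm
      rw [← hξk] at hlx hxr
      exact dev_B hn hev hξmem k hocc (g_mem hn hev hMlt).1 hlx hxr hr1 hrl hil hir hInt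

lemma main (hn : 4 ≤ n) (hev : Even n) :
    IsEquilibrium (px n) ∧ ∀ k : Fin n, profit k (px n) = 1/n := by
  constructor
  · intro k x' hx'
    rw [profit_px hn hev k]
    exact dev_main hn hev k hx'
  · exact profit_px hn hev

end PE

theorem paired_equally_spaced_equilibrium {n : ℕ} [NeZero n] (hn : 4 ≤ n)
    (hev : Even n) :
    IsEquilibrium (fun k : Fin n => (((k : ℕ) / 2 : ℕ) : ℝ) * 2 / n) ∧
    ∀ k : Fin n, profit k (fun k : Fin n => (((k : ℕ) / 2 : ℕ) : ℝ) * 2 / n) = 1 / n :=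
  PE.main hn hev
end
end
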